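/- Let n and n_i be positive integers with n_i ≤ n. Then for every v ∈ {1,...,n_i} there is exactly one j ∈ {1,...,n} such that ⌈n_i·j/n⌉ = v and ⌈n_i·(j+1)/n⌉ = v + 1. -/
import Mathlib


/-- Each target level v ∈ {1,...,n_i} triggers exactly one stage j with a jump. -/
theorem unique_jump_stage (n ni : ℕ) (hn : 0 < n) (hni : 0 < ni) (hle : ni ≤ n) :
    ∀ v ∈ Finset.Icc 1 ni, ∃! j : ℕ, j ∈ Finset.Icc 1 n ∧
      ⌈(ni * j : ℚ) / n⌉ = (v : ℤ) ∧ ⌈(ni * (j + 1) : ℚ) / n⌉ = (v : ℤ) + 1 := by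
  intro v hv
  obtain ⟨hv1, hv2⟩ := Finset.mem_Icc.mp hv
  have hnQ : (0:ℚ) < n := by exact_mod_cast hn
  -- Key characterization of the jump condition
  have key : ∀ k : ℕ,
      (⌈(ni * k : ℚ) / n⌉ = (v : ℤ) ∧ ⌈(ni * (k + 1) : ℚ) / n⌉ = (v : ℤ) + 1)
      ↔ (ni * k ≤ v * n ∧ v * n < ni * (k + 1)) := by
    intro k
    rw [Int.ceil_eq_iff, Int.ceil_eq_iff]
    push_cast
    constructor
    · rintro ⟨⟨_, h2⟩, h3, _⟩
      constructor
      · exact_mod_cast (div_le_iff₀ hnQ).mp h2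
      · exact_mod_cast (lt_div_iff₀ hnQ).mp (by linarith : (v:ℚ) < (ni * (k + 1)) / n)
    · rintro ⟨h1, h2⟩
      have h1Q : (ni:ℚ) * k ≤ v * n := by exact_mod_cast h1
      have h2Q : (v:ℚ) * n < ni * (k + 1) := by exact_mod_cast h2
      have hleQ : (ni:ℚ) ≤ n := by exact_mod_cast hle
      refine ⟨⟨?_, ?_⟩, ?_, ?_⟩
      · rw [lt_div_iff₀ hnQ]; nlinarith
      · rw [div_le_iff₀ hnQ]; nlinarith
      · rw [lt_div_iff₀ hnQ]; nlinarith
      · rw [div_le_iff₀ hnQ]; nlinarith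
  refine ⟨v * n / ni, ⟨?_, ?_⟩, ?_⟩
  · -- membership
    rw [Finset.mem_Icc]
    constructor
    · rw [Nat.one_le_div_iff hni]
      calc ni ≤ n := hle
        _ ≤ v * n := Nat.le_mul_of_pos_left n hv1
    · calc v * n / ni ≤ ni * n / ni := Nat.div_le_div_right (Nat.mul_le_mul_right n hv2)
        _ = n := Nat.mul_div_cancel_left n hni
  · rw [key]
    have hmod := Nat.div_add_mod (v * n) ni
    have hlt := Nat.mod_lt (v * n) hni
    have hexp : ni * (v * n / ni + 1) = ni * (v * n / ni) + ni := by ring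
    omega
  · rintro j' ⟨_, hc⟩
    rw [key] at hc
    have hmod := Nat.div_add_mod (v * n) ni
    have hlt := Nat.mod_lt (v * n) hni
    set q := v * n / ni with hq
    have hexp : ni * (q + 1) = ni * q + ni := by ring
    have hexp' : ni * (j' + 1) = ni * j' + ni := by ring
    rcases lt_trichotomy j' q with h | h | h
    · exfalso
      have : ni * (j' + 1) ≤ ni * q := Nat.mul_le_mul_left ni h
      omega
    · exact h
    · exfalso
      have : ni * (q + 1) ≤ ni * j' := Nat.mul_le_mul_left ni h
      omega
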